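/- Chiral Ward identity for leakage amplitudes: let H be a finite-dimensional complex inner product space, let G and X be self-adjoint operators on H, and let E be a self-adjoint unitary operator on H satisfying GE = EG = X. Suppose f₊, f₋, h₊, h₋ ∈ H and real numbers θ, φ satisfy E f₊ = e^{iθ} f₋ and E h₊ = e^{iφ} h₋. Then |⟨f₊, G h₊⟩| = |⟨f₋, X h₊⟩| = |⟨f₊, X h₋⟩| = |⟨f₋, G h₋⟩| = |⟨h₊, G f₊⟩| = |⟨h₋, X f₊⟩| = |⟨h₊, X f₋⟩| = |⟨h₋, G f₋⟩|. -/

import Mathlib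

/-!
Chiral Ward identity for leakage amplitudes: for self-adjoint `G` and `X`,
a self-adjoint unitary `E` with `GE = EG = X`, and eigenvector pairs related
by `E` up to phases, the eight leakage amplitudes coincide in absolute value.
-/

open scoped InnerProductSpace

/-- Auxiliary: the four leakage amplitudes with `f` in the first slot all
have the same absolute value as `⟪fp, G hp⟫`. -/
lemma ward_identity_leakage_aux {H : Type*} [NormedAddCommGroup H]
    [InnerProductSpace ℂ H] [FiniteDimensional ℂ H]
    (G X E : H →ₗ[ℂ] H)
    (hEa : LinearMap.adjoint E = E)
    (hEX : E ∘ₗ X = G) (hXE : X ∘ₗ E = G) (hEGE : E ∘ₗ (G ∘ₗ E) = G)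
    (fp fm hp hm : H) (θ φ : ℝ)
    (hf : E fp = Complex.exp (Complex.I * (θ : ℂ)) • fm)
    (hh : E hp = Complex.exp (Complex.I * (φ : ℂ)) • hm) :
    ‖⟪fp, G hp⟫_ℂ‖ = ‖⟪fm, X hp⟫_ℂ‖ ∧
    ‖⟪fp, G hp⟫_ℂ‖ = ‖⟪fp, X hm⟫_ℂ‖ ∧
    ‖⟪fp, G hp⟫_ℂ‖ = ‖⟪fm, G hm⟫_ℂ‖ := by
  have hE : ∀ x y : H, ⟪x, E y⟫_ℂ = ⟪E x, y⟫_ℂ := by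
    intro x y
    conv_lhs => rw [← hEa, LinearMap.adjoint_inner_right]
  have hθ : ‖Complex.exp (Complex.I * (θ:ℂ))‖ = 1 := by
    simp [Complex.norm_exp]
  have hφ : ‖Complex.exp (Complex.I * (φ:ℂ))‖ = 1 := by
    simp [Complex.norm_exp]
  refine ⟨?_, ?_, ?_⟩
  · have : ⟪fp, G hp⟫_ℂ =
        (starRingEnd ℂ) (Complex.exp (Complex.I * (θ:ℂ))) * ⟪fm, X hp⟫_ℂ := by
      rw [← LinearMap.congr_fun hEX hp, LinearMap.comp_apply, hE, hf, inner_smul_left]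
    rw [this, norm_mul, RCLike.norm_conj, hθ, one_mul]
  · have : ⟪fp, G hp⟫_ℂ = Complex.exp (Complex.I * (φ:ℂ)) * ⟪fp, X hm⟫_ℂ := by
      rw [← LinearMap.congr_fun hXE hp, LinearMap.comp_apply, hh, map_smul,
        inner_smul_right]
    rw [this, norm_mul, hφ, one_mul]
  · have : ⟪fp, G hp⟫_ℂ =
        (starRingEnd ℂ) (Complex.exp (Complex.I * (θ:ℂ))) *
          (Complex.exp (Complex.I * (φ:ℂ)) * ⟪fm, G hm⟫_ℂ) := by
      rw [← LinearMap.congr_fun hEGE hp, LinearMap.comp_apply, LinearMap.comp_apply,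
        hE, hh, map_smul, inner_smul_right, hf, inner_smul_left]
      ring
    rw [this, norm_mul, norm_mul, RCLike.norm_conj, hθ, hφ, one_mul, one_mul]

/-- Chiral Ward identity for leakage amplitudes. -/
theorem ward_identity_leakage {H : Type*} [NormedAddCommGroup H]
    [InnerProductSpace ℂ H] [FiniteDimensional ℂ H]
    (G X E : H →ₗ[ℂ] H)
    (hG : LinearMap.adjoint G = G) (hX : LinearMap.adjoint X = X)
    (hEa : LinearMap.adjoint E = E) (hEu : E ∘ₗ E = LinearMap.id)
    (hGE : G ∘ₗ E = X) (hEG : E ∘ₗ G = X)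
    (fp fm hp hm : H) (θ φ : ℝ)
    (hf : E fp = Complex.exp (Complex.I * (θ : ℂ)) • fm)
    (hh : E hp = Complex.exp (Complex.I * (φ : ℂ)) • hm) :
    ‖⟪fp, G hp⟫_ℂ‖ = ‖⟪fm, X hp⟫_ℂ‖ ∧
    ‖⟪fm, X hp⟫_ℂ‖ = ‖⟪fp, X hm⟫_ℂ‖ ∧
    ‖⟪fp, X hm⟫_ℂ‖ = ‖⟪fm, G hm⟫_ℂ‖ ∧
    ‖⟪fm, G hm⟫_ℂ‖ = ‖⟪hp, G fp⟫_ℂ‖ ∧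
    ‖⟪hp, G fp⟫_ℂ‖ = ‖⟪hm, X fp⟫_ℂ‖ ∧
    ‖⟪hm, X fp⟫_ℂ‖ = ‖⟪hp, X fm⟫_ℂ‖ ∧
    ‖⟪hp, X fm⟫_ℂ‖ = ‖⟪hm, G fm⟫_ℂ‖ := by
  have hEX : E ∘ₗ X = G := by
    rw [← hEG, ← LinearMap.comp_assoc, hEu, LinearMap.id_comp]
  have hXE : X ∘ₗ E = G := by
    rw [← hGE, LinearMap.comp_assoc, hEu, LinearMap.comp_id]
  have hEGE : E ∘ₗ (G ∘ₗ E) = G := by rw [hGE, hEX]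
  obtain ⟨a1, a2, a3⟩ := ward_identity_leakage_aux G X E hEa hEX hXE hEGE
    fp fm hp hm θ φ hf hh
  obtain ⟨b1, b2, b3⟩ := ward_identity_leakage_aux G X E hEa hEX hXE hEGE
    hp hm fp fm φ θ hh hf
  have hswap : ‖⟪fp, G hp⟫_ℂ‖ = ‖⟪hp, G fp⟫_ℂ‖ := by
    have : ⟪hp, G fp⟫_ℂ = (starRingEnd ℂ) ⟪fp, G hp⟫_ℂ := by
      conv_rhs => rw [← hG]
      rw [LinearMap.adjoint_inner_right, inner_conj_symm]
    rw [this, RCLike.norm_conj]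
  exact ⟨a1, a1 ▸ a2, a2 ▸ a3, a3 ▸ hswap, b1, b1 ▸ b2, b2 ▸ b3⟩
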